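/- Let U ∈ ℂ^(n×n) be unitary with columns u₁, …, uₙ and M ⊆ {1, …, n} with |M| = m. Let X_R, X_I ∈ ℝ^n be random vectors with all 2n entries mutually independent, each of variance at most 1/4. Define Y[k] = Σ_{j=1}^{n} (Σ_{i ∈ M} (u_i[k])* u_j[i]) · (X_R[j] + i·X_I[j]). Then (1/n) Σ_{k=1}^{n} Var(Y[k]) ≤ m / (2n). -/

import Mathlib

open MeasureTheory ProbabilityTheory Finset

lemma aux_right {Ω : Type*} [MeasurableSpace Ω] {μ : Measure Ω} [IsProbabilityMeasure μ]
    {X W : Ω → ℝ} (hX : Measurable X) (hW : Measurable W)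
    (hind : IndepFun X W μ) (h : MemLp (fun ω => X ω + W ω) 2 μ) : MemLp W 2 μ := by
  have hmap : μ.map (fun ω => (X ω, W ω)) = (μ.map X).prod (μ.map W) :=
    (indepFun_iff_map_prod_eq_prod_map_map hX.aemeasurable hW.aemeasurable).mp hind
  have hint : Integrable (fun ω => ‖X ω + W ω‖ ^ 2) μ :=
    (memLp_two_iff_integrable_sq_norm ((hX.add hW).aestronglyMeasurable)).mp h
  have hg : Integrable (fun p : ℝ × ℝ => ‖p.1 + p.2‖ ^ 2) ((μ.map X).prod (μ.map W)) := by
    rw [← hmap, integrable_map_measure (g := fun p : ℝ × ℝ => ‖p.1 + p.2‖ ^ 2)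
      ((measurable_fst.add measurable_snd).norm.pow_const 2).aestronglyMeasurable
      (hX.prodMk hW).aemeasurable]
    exact hint
  haveI : IsProbabilityMeasure (μ.map X) := Measure.isProbabilityMeasure_map hX.aemeasurable
  haveI : IsProbabilityMeasure (μ.map W) := Measure.isProbabilityMeasure_map hW.aemeasurable
  haveI : (ae (μ.map X)).NeBot := ae_neBot.2 (IsProbabilityMeasure.ne_zero _)
  obtain ⟨x₀, hx₀⟩ := hg.prod_right_ae.exists
  have h1 : Integrable (fun ω => ‖x₀ + W ω‖ ^ 2) μ := by
    have hm : AEStronglyMeasurable (fun y : ℝ => ‖x₀ + y‖ ^ 2) (μ.map W) := ((measurable_const.add measurable_id').norm.pow_const 2).aestronglyMeasurable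
    exact (integrable_map_measure hm hW.aemeasurable).mp (by simpa using hx₀)
  have h2 : MemLp (fun ω => x₀ + W ω) 2 μ :=
    (memLp_two_iff_integrable_sq_norm ((measurable_const.add hW).aestronglyMeasurable)).mpr h1
  have h3 := h2.sub (memLp_const x₀)
  have : (fun ω => x₀ + W ω) - (fun _ => x₀) = W := by funext ω; simp
  rwa [this] at h3

lemma aux_sum {Ω ι : Type*} [MeasurableSpace Ω] {μ : Measure Ω} [IsProbabilityMeasure μ]
    [DecidableEq ι] {f : ι → Ω → ℝ} (hmeas : ∀ i, Measurable (f i))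
    (hind : iIndepFun f μ) (s : Finset ι) :
    MemLp (fun ω => ∑ i ∈ s, f i ω) 2 μ → ∀ i ∈ s, MemLp (f i) 2 μ := by
  induction s using Finset.induction_on with
  | empty => intro _ i hi; simp at hi
  | @insert a s ha ih =>
    intro h i hi
    have hWmeas : Measurable (fun ω => ∑ i ∈ s, f i ω) :=
      Finset.measurable_sum s fun i _ => hmeas i
    have hIndAW : IndepFun (f a) (fun ω => ∑ i ∈ s, f i ω) μ := by
      have := (hind.indepFun_finsetSum_of_notMem hmeas ha).symm
      have hsa : (∑ j ∈ s, f j) = fun ω => ∑ i ∈ s, f i ω := by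
        funext ω; simp [Finset.sum_apply]
      rwa [hsa] at this
    have h' : MemLp (fun ω => f a ω + ∑ i ∈ s, f i ω) 2 μ := by
      have : (fun ω => ∑ i ∈ insert a s, f i ω)
          = fun ω => f a ω + ∑ i ∈ s, f i ω := by
        funext ω; rw [Finset.sum_insert ha]
      rwa [this] at h
    have hWs : MemLp (fun ω => ∑ i ∈ s, f i ω) 2 μ :=
      aux_right (hmeas a) hWmeas hIndAW h'
    have hA : MemLp (f a) 2 μ := by
      refine aux_right hWmeas (hmeas a) hIndAW.symm ?_
      have : (fun ω => (∑ i ∈ s, f i ω) + f a ω) = fun ω => f a ω + ∑ i ∈ s, f i ω := by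
        funext ω; ring
      rwa [this]
    rcases Finset.mem_insert.mp hi with rfl | hi'
    · exact hA
    · exact ih hWs i hi'

lemma aux_key {n : ℕ} (U : Matrix (Fin n) (Fin n) ℂ) (hU : U ∈ Matrix.unitaryGroup (Fin n) ℂ)
    (M : Finset (Fin n)) :
    ∑ k : Fin n, ∑ j : Fin n,
      Complex.normSq (∑ i ∈ M, (starRingEnd ℂ) (U k i) * U i j) = M.card := by
  obtain ⟨hUU, hUU'⟩ := (Unitary.mem_iff).mp hU
  have h1 : ∀ i i' : Fin n, ∑ k : Fin n, (starRingEnd ℂ) (U k i) * U k i'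
      = if i = i' then 1 else 0 := by
    intro i i'
    have := congrFun (congrFun (congrArg (fun A => (A : Matrix (Fin n) (Fin n) ℂ)) hUU) i) i'
    simpa [Matrix.mul_apply, Matrix.one_apply, Matrix.conjTranspose_apply, Matrix.star_apply,
      Complex.star_def] using this
  have h2 : ∀ i i' : Fin n, ∑ j : Fin n, U i j * (starRingEnd ℂ) (U i' j)
      = if i = i' then 1 else 0 := by
    intro i i'
    have := congrFun (congrFun (congrArg (fun A => (A : Matrix (Fin n) (Fin n) ℂ)) hUU') i) i'
    simpa [Matrix.mul_apply, Matrix.one_apply, Matrix.conjTranspose_apply, Matrix.star_apply,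
      Complex.star_def] using this
  have key : ∑ k : Fin n, ∑ j : Fin n,
      ((Complex.normSq (∑ i ∈ M, (starRingEnd ℂ) (U k i) * U i j) : ℝ) : ℂ) = (M.card : ℂ) := by
    calc ∑ k : Fin n, ∑ j : Fin n,
        ((Complex.normSq (∑ i ∈ M, (starRingEnd ℂ) (U k i) * U i j) : ℝ) : ℂ)
        = ∑ k : Fin n, ∑ j : Fin n, ∑ i ∈ M, ∑ i' ∈ M,
            ((starRingEnd ℂ) (U k i) * U k i') * (U i j * (starRingEnd ℂ) (U i' j)) := by
          refine Finset.sum_congr rfl fun k _ => Finset.sum_congr rfl fun j _ => ?_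
          rw [← Complex.mul_conj, map_sum, Finset.sum_mul_sum]
          refine Finset.sum_congr rfl fun i _ => Finset.sum_congr rfl fun i' _ => ?_
          simp only [map_mul, Complex.conj_conj]
          ring
      _ = ∑ i ∈ M, ∑ i' ∈ M, (∑ k : Fin n, (starRingEnd ℂ) (U k i) * U k i')
            * (∑ j : Fin n, U i j * (starRingEnd ℂ) (U i' j)) := by
          calc ∑ k : Fin n, ∑ j : Fin n, ∑ i ∈ M, ∑ i' ∈ M,
              ((starRingEnd ℂ) (U k i) * U k i') * (U i j * (starRingEnd ℂ) (U i' j))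
              = ∑ k : Fin n, ∑ i ∈ M, ∑ j : Fin n, ∑ i' ∈ M,
                ((starRingEnd ℂ) (U k i) * U k i') * (U i j * (starRingEnd ℂ) (U i' j)) :=
                Finset.sum_congr rfl fun k _ => Finset.sum_comm
            _ = ∑ i ∈ M, ∑ k : Fin n, ∑ j : Fin n, ∑ i' ∈ M,
                ((starRingEnd ℂ) (U k i) * U k i') * (U i j * (starRingEnd ℂ) (U i' j)) :=
                Finset.sum_comm
            _ = ∑ i ∈ M, ∑ k : Fin n, ∑ i' ∈ M, ∑ j : Fin n,
                ((starRingEnd ℂ) (U k i) * U k i') * (U i j * (starRingEnd ℂ) (U i' j)) :=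
                Finset.sum_congr rfl fun i _ => Finset.sum_congr rfl fun k _ => Finset.sum_comm
            _ = ∑ i ∈ M, ∑ i' ∈ M, ∑ k : Fin n, ∑ j : Fin n,
                ((starRingEnd ℂ) (U k i) * U k i') * (U i j * (starRingEnd ℂ) (U i' j)) :=
                Finset.sum_congr rfl fun i _ => Finset.sum_comm
            _ = ∑ i ∈ M, ∑ i' ∈ M, (∑ k : Fin n, (starRingEnd ℂ) (U k i) * U k i')
                * (∑ j : Fin n, U i j * (starRingEnd ℂ) (U i' j)) :=
                Finset.sum_congr rfl fun i _ => Finset.sum_congr rfl fun i' _ =>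
                  (Finset.sum_mul_sum _ _ _ _).symm
      _ = (M.card : ℂ) := by
          simp only [h1, h2]
          simp [Finset.sum_ite_eq, Finset.sum_ite_eq']
  exact_mod_cast key

lemma aux_var_bound {Ω : Type*} [MeasurableSpace Ω] {μ : Measure Ω} [IsProbabilityMeasure μ]
    {n : ℕ} {XR XI : Fin n → Ω → ℝ}
    (hXRmeas : ∀ j, Measurable (XR j)) (hXImeas : ∀ j, Measurable (XI j))
    (hindep : iIndepFun (Sum.elim XR XI) μ)
    (hvarR : ∀ j, variance (XR j) μ ≤ 1/4) (hvarI : ∀ j, variance (XI j) μ ≤ 1/4)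
    (c : Fin n → ℂ) (Yk : Ω → ℂ)
    (hYk : ∀ ω, Yk ω = ∑ j : Fin n, c j * ((XR j ω : ℂ) + (XI j ω : ℂ) * Complex.I)) :
    ∫ ω, ‖Yk ω - ∫ ω', Yk ω' ∂μ‖ ^ 2 ∂μ
      ≤ (1/2) * ∑ j : Fin n, Complex.normSq (c j) := by
  classical
  have hYmeas : Measurable Yk := by
    have hfe : Yk = fun ω => ∑ j : Fin n, c j * ((XR j ω : ℂ) + (XI j ω : ℂ) * Complex.I) :=
      funext hYk
    rw [hfe]
    exact Finset.measurable_sum _ fun j _ =>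
      measurable_const.mul ((Complex.measurable_ofReal.comp (hXRmeas j)).add
        ((Complex.measurable_ofReal.comp (hXImeas j)).mul_const _))
  set E : ℂ := ∫ ω', Yk ω' ∂μ with hE
  have hRHS : 0 ≤ (1/2 : ℝ) * ∑ j : Fin n, Complex.normSq (c j) := by
    have h0 : 0 ≤ ∑ j : Fin n, Complex.normSq (c j) :=
      Finset.sum_nonneg fun j _ => Complex.normSq_nonneg _
    linarith
  by_cases hL : MemLp Yk 2 μ
  swap
  · have hni : ¬ Integrable (fun ω => ‖Yk ω - E‖ ^ 2) μ := by
      intro hint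
      apply hL
      have habs : (fun ω => ‖Yk ω - E‖ ^ 2) = fun ω => ‖Yk ω - E‖ ^ 2 := by
        funext ω; rfl
      rw [habs] at hint
      have h2 : MemLp (fun ω => Yk ω - E) 2 μ :=
        (memLp_two_iff_integrable_sq_norm
          ((hYmeas.sub measurable_const).aestronglyMeasurable)).mpr hint
      have h3 := h2.add (memLp_const E)
      have heq : ((fun ω => Yk ω - E) + fun _ => E) = Yk := by funext ω; simp
      rwa [heq] at h3
    rw [integral_undef hni]
    exact hRHS
  · -- main case
    set g : (Fin n ⊕ Fin n) → ℝ → ℝ :=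
      Sum.elim (fun j x => (c j).re * x) (fun j x => -((c j).im) * x) with hgdef
    set g' : (Fin n ⊕ Fin n) → ℝ → ℝ :=
      Sum.elim (fun j x => (c j).im * x) (fun j x => (c j).re * x) with hg'def
    have hgmeas : ∀ i, Measurable (g i) := by
      rintro (j|j) <;> exact measurable_id.const_mul _
    have hg'meas : ∀ i, Measurable (g' i) := by
      rintro (j|j) <;> exact measurable_id.const_mul _
    have hXmeas : ∀ i, Measurable (Sum.elim XR XI i) := by
      rintro (j|j); exacts [hXRmeas j, hXImeas j]
    set FR : (Fin n ⊕ Fin n) → Ω → ℝ := fun i => g i ∘ Sum.elim XR XI i with hFRdef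
    set FI : (Fin n ⊕ Fin n) → Ω → ℝ := fun i => g' i ∘ Sum.elim XR XI i with hFIdef
    have hFRmeas : ∀ i, Measurable (FR i) := fun i => (hgmeas i).comp (hXmeas i)
    have hFImeas : ∀ i, Measurable (FI i) := fun i => (hg'meas i).comp (hXmeas i)
    have hindR : iIndepFun FR μ := hindep.comp g hgmeas
    have hindI : iIndepFun FI μ := hindep.comp g' hg'meas
    have hRe : ∀ ω, (Yk ω).re = ∑ i : Fin n ⊕ Fin n, FR i ω := by
      intro ω
      rw [hYk ω, Complex.re_sum, Fintype.sum_sum_type, ← Finset.sum_add_distrib]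
      refine Finset.sum_congr rfl fun j _ => ?_
      simp only [hFRdef, hgdef, Sum.elim_inl, Sum.elim_inr, Function.comp_apply,
        Complex.mul_re, Complex.add_re, Complex.add_im, Complex.mul_im,
        Complex.ofReal_re, Complex.ofReal_im, Complex.I_re, Complex.I_im]
      ring
    have hIm : ∀ ω, (Yk ω).im = ∑ i : Fin n ⊕ Fin n, FI i ω := by
      intro ω
      rw [hYk ω, Complex.im_sum, Fintype.sum_sum_type, ← Finset.sum_add_distrib]
      refine Finset.sum_congr rfl fun j _ => ?_
      simp only [hFIdef, hg'def, Sum.elim_inl, Sum.elim_inr, Function.comp_apply,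
        Complex.mul_re, Complex.add_re, Complex.add_im, Complex.mul_im,
        Complex.ofReal_re, Complex.ofReal_im, Complex.I_re, Complex.I_im]
      ring
    have hre : MemLp (fun ω => (Yk ω).re) 2 μ := by
      have := hL.re
      simpa [RCLike.re_to_complex] using this
    have him : MemLp (fun ω => (Yk ω).im) 2 μ := by
      have := hL.im
      simpa [RCLike.im_to_complex] using this
    have hmemFR : ∀ i, MemLp (FR i) 2 μ := by
      have hsum : MemLp (fun ω => ∑ i ∈ Finset.univ, FR i ω) 2 μ := by
        have hfe : (fun ω => ∑ i ∈ Finset.univ, FR i ω) = fun ω => (Yk ω).re := by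
          funext ω; rw [hRe ω]
        rwa [hfe]
      exact fun i => aux_sum hFRmeas hindR Finset.univ hsum i (Finset.mem_univ i)
    have hmemFI : ∀ i, MemLp (FI i) 2 μ := by
      have hsum : MemLp (fun ω => ∑ i ∈ Finset.univ, FI i ω) 2 μ := by
        have hfe : (fun ω => ∑ i ∈ Finset.univ, FI i ω) = fun ω => (Yk ω).im := by
          funext ω; rw [hIm ω]
        rwa [hfe]
      exact fun i => aux_sum hFImeas hindI Finset.univ hsum i (Finset.mem_univ i)
    have hvarRe : variance (fun ω => (Yk ω).re) μ
        ≤ ∑ j : Fin n, ((c j).re ^ 2 + (c j).im ^ 2) * (1/4) := by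
      have hfun : (fun ω => (Yk ω).re) = ∑ i ∈ Finset.univ, FR i := by
        funext ω; rw [hRe ω, Finset.sum_apply]
      rw [hfun, IndepFun.variance_sum (fun i _ => hmemFR i)
        (fun i _ j _ hij => hindR.indepFun hij)]
      rw [Fintype.sum_sum_type]
      have h1 : ∀ j, variance (FR (Sum.inl j)) μ = (c j).re ^ 2 * variance (XR j) μ := by
        intro j
        have : FR (Sum.inl j) = fun ω => (c j).re * XR j ω := rfl
        rw [this, variance_const_mul]
      have h2 : ∀ j, variance (FR (Sum.inr j)) μ = (c j).im ^ 2 * variance (XI j) μ := by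
        intro j
        have : FR (Sum.inr j) = fun ω => -((c j).im) * XI j ω := rfl
        rw [this, variance_const_mul, neg_sq]
      calc (∑ j : Fin n, variance (FR (Sum.inl j)) μ)
            + ∑ j : Fin n, variance (FR (Sum.inr j)) μ
          = ∑ j : Fin n, ((c j).re ^ 2 * variance (XR j) μ
              + (c j).im ^ 2 * variance (XI j) μ) := by
            rw [← Finset.sum_add_distrib]
            exact Finset.sum_congr rfl fun j _ => by rw [h1 j, h2 j]
        _ ≤ ∑ j : Fin n, ((c j).re ^ 2 + (c j).im ^ 2) * (1/4) := by
            refine Finset.sum_le_sum fun j _ => ?_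
            have e1 : (c j).re ^ 2 * variance (XR j) μ ≤ (c j).re ^ 2 * (1/4) :=
              mul_le_mul_of_nonneg_left (hvarR j) (sq_nonneg _)
            have e2 : (c j).im ^ 2 * variance (XI j) μ ≤ (c j).im ^ 2 * (1/4) :=
              mul_le_mul_of_nonneg_left (hvarI j) (sq_nonneg _)
            nlinarith [sq_nonneg ((c j).re), sq_nonneg ((c j).im)]
    have hvarIm : variance (fun ω => (Yk ω).im) μ
        ≤ ∑ j : Fin n, ((c j).re ^ 2 + (c j).im ^ 2) * (1/4) := by
      have hfun : (fun ω => (Yk ω).im) = ∑ i ∈ Finset.univ, FI i := by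
        funext ω; rw [hIm ω, Finset.sum_apply]
      rw [hfun, IndepFun.variance_sum (fun i _ => hmemFI i)
        (fun i _ j _ hij => hindI.indepFun hij)]
      rw [Fintype.sum_sum_type]
      have h1 : ∀ j, variance (FI (Sum.inl j)) μ = (c j).im ^ 2 * variance (XR j) μ := by
        intro j
        have : FI (Sum.inl j) = fun ω => (c j).im * XR j ω := rfl
        rw [this, variance_const_mul]
      have h2 : ∀ j, variance (FI (Sum.inr j)) μ = (c j).re ^ 2 * variance (XI j) μ := by
        intro j
        have : FI (Sum.inr j) = fun ω => (c j).re * XI j ω := rfl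
        rw [this, variance_const_mul]
      calc (∑ j : Fin n, variance (FI (Sum.inl j)) μ)
            + ∑ j : Fin n, variance (FI (Sum.inr j)) μ
          = ∑ j : Fin n, ((c j).im ^ 2 * variance (XR j) μ
              + (c j).re ^ 2 * variance (XI j) μ) := by
            rw [← Finset.sum_add_distrib]
            exact Finset.sum_congr rfl fun j _ => by rw [h1 j, h2 j]
        _ ≤ ∑ j : Fin n, ((c j).re ^ 2 + (c j).im ^ 2) * (1/4) := by
            refine Finset.sum_le_sum fun j _ => ?_
            have e1 : (c j).im ^ 2 * variance (XR j) μ ≤ (c j).im ^ 2 * (1/4) :=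
              mul_le_mul_of_nonneg_left (hvarR j) (sq_nonneg _)
            have e2 : (c j).re ^ 2 * variance (XI j) μ ≤ (c j).re ^ 2 * (1/4) :=
              mul_le_mul_of_nonneg_left (hvarI j) (sq_nonneg _)
            nlinarith
    -- now relate the integral to the two variances
    have hint : Integrable Yk μ := hL.integrable one_le_two
    have hEre : E.re = ∫ ω, (Yk ω).re ∂μ := by
      have := integral_re (μ := μ) (f := Yk) hint
      simp only [RCLike.re_to_complex] at this
      rw [hE, ← this]
    have hEim : E.im = ∫ ω, (Yk ω).im ∂μ := by
      have := integral_im (μ := μ) (f := Yk) hint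
      simp only [RCLike.im_to_complex] at this
      rw [hE, ← this]
    have intRe : Integrable (fun ω => ((Yk ω).re - E.re) ^ 2) μ := by
      have := (hre.sub (memLp_const E.re)).integrable_sq
      simpa using this
    have intIm : Integrable (fun ω => ((Yk ω).im - E.im) ^ 2) μ := by
      have := (him.sub (memLp_const E.im)).integrable_sq
      simpa using this
    have hsplit : ∫ ω, ‖Yk ω - E‖ ^ 2 ∂μ
        = (∫ ω, ((Yk ω).re - E.re) ^ 2 ∂μ) + ∫ ω, ((Yk ω).im - E.im) ^ 2 ∂μ := by
      rw [← integral_add intRe intIm]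
      refine integral_congr_ae (Filter.Eventually.of_forall fun ω => ?_)
      show ‖Yk ω - E‖ ^ 2 = ((Yk ω).re - E.re) ^ 2 + ((Yk ω).im - E.im) ^ 2
      rw [Complex.sq_norm, Complex.normSq_apply, Complex.sub_re, Complex.sub_im]
      ring
    have hv1 : ∫ ω, ((Yk ω).re - E.re) ^ 2 ∂μ = variance (fun ω => (Yk ω).re) μ := by
      rw [variance_eq_integral hre.aestronglyMeasurable.aemeasurable]
      rw [← hEre]
    have hv2 : ∫ ω, ((Yk ω).im - E.im) ^ 2 ∂μ = variance (fun ω => (Yk ω).im) μ := by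
      rw [variance_eq_integral him.aestronglyMeasurable.aemeasurable]
      rw [← hEim]
    rw [hsplit, hv1, hv2]
    have hfinal : ∑ j : Fin n, ((c j).re ^ 2 + (c j).im ^ 2) * (1/4)
          + ∑ j : Fin n, ((c j).re ^ 2 + (c j).im ^ 2) * (1/4)
        = (1/2) * ∑ j : Fin n, Complex.normSq (c j) := by
      rw [← Finset.sum_add_distrib, Finset.mul_sum]
      refine Finset.sum_congr rfl fun j _ => ?_
      rw [Complex.normSq_apply]
      ring
    linarith [hvarRe, hvarIm]


theorem stmt7 {Ω : Type*} [MeasurableSpace Ω] (μ : Measure Ω) [IsProbabilityMeasure μ]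
    (n : ℕ) (hn : 0 < n) (U : Matrix (Fin n) (Fin n) ℂ)
    (hU : U ∈ Matrix.unitaryGroup (Fin n) ℂ)
    (M : Finset (Fin n)) (m : ℕ) (hM : M.card = m)
    (XR XI : Fin n → Ω → ℝ)
    (hXRmeas : ∀ j, Measurable (XR j)) (hXImeas : ∀ j, Measurable (XI j))
    (hindep : iIndepFun (Sum.elim XR XI :
      (Fin n ⊕ Fin n) → Ω → ℝ) μ)
    (hvarR : ∀ j, variance (XR j) μ ≤ 1/4)
    (hvarI : ∀ j, variance (XI j) μ ≤ 1/4)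
    (Y : Fin n → Ω → ℂ)
    (hY : ∀ k ω, Y k ω =
      ∑ j : Fin n, (∑ i ∈ M, (starRingEnd ℂ) (U k i) * U i j) *
        ((XR j ω : ℂ) + (XI j ω : ℂ) * Complex.I)) :
    (1 / (n:ℝ)) * ∑ k : Fin n,
        ∫ ω, ‖Y k ω - ∫ ω', Y k ω' ∂μ‖ ^ 2 ∂μ
      ≤ m / (2 * n) := by
  have hbound : ∀ k : Fin n,
      ∫ ω, ‖Y k ω - ∫ ω', Y k ω' ∂μ‖ ^ 2 ∂μ
        ≤ (1/2) * ∑ j : Fin n,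
            Complex.normSq (∑ i ∈ M, (starRingEnd ℂ) (U k i) * U i j) := fun k =>
    aux_var_bound hXRmeas hXImeas hindep hvarR hvarI
      (fun j => ∑ i ∈ M, (starRingEnd ℂ) (U k i) * U i j) (Y k) (hY k)
  have hkey : ∑ k : Fin n, ∑ j : Fin n,
      Complex.normSq (∑ i ∈ M, (starRingEnd ℂ) (U k i) * U i j) = (m : ℝ) := by
    rw [aux_key U hU M, hM]
  have hsum : ∑ k : Fin n, ∫ ω, ‖Y k ω - ∫ ω', Y k ω' ∂μ‖ ^ 2 ∂μ
      ≤ (m : ℝ) / 2 := by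
    calc ∑ k : Fin n, ∫ ω, ‖Y k ω - ∫ ω', Y k ω' ∂μ‖ ^ 2 ∂μ
        ≤ ∑ k : Fin n, (1/2) * ∑ j : Fin n,
            Complex.normSq (∑ i ∈ M, (starRingEnd ℂ) (U k i) * U i j) :=
          Finset.sum_le_sum fun k _ => hbound k
      _ = (m : ℝ) / 2 := by rw [← Finset.mul_sum, hkey]; ring
  have hn' : (0:ℝ) < (n:ℝ) := by exact_mod_cast hn
  calc (1 / (n:ℝ)) * ∑ k : Fin n,
        ∫ ω, ‖Y k ω - ∫ ω', Y k ω' ∂μ‖ ^ 2 ∂μ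
      ≤ (1 / (n:ℝ)) * ((m : ℝ) / 2) :=
        mul_le_mul_of_nonneg_left hsum (by positivity)
    _ = m / (2 * n) := by rw [one_div, inv_mul_eq_div, div_div, mul_comm]
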